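/- Fix c > 0 and let X_1, X_2, … be finite independent identically distributed real random variables such that for some real threshold t_0, P(X_1 < t_0) < 1/2 and P(X_1 < t_0 − c) = δ_0 > 0. Define S_n = ∑_{i=1}^n X_i. Then there exists a constant C > 0 (independent of ε) such that for every ε ∈ (0,1) there exists a positive integer n ≤ C·(ln(1/ε) + 1) with the property that for every real t, if P(S_n < t) > ε then P(S_n < t − c) > (δ_0/7)·P(S_n < t). -/

import Mathlib

open MeasureTheory ProbabilityTheory
open scoped ENNReal

/-- Fix `c > 0` and let `X 0, X 1, …` be i.i.d. real random variables
with `P(X < t₀) < 1/2` and `P(X < t₀ - c) = δ₀ > 0` for some threshold `t₀`.  With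
`S n = ∑_{i<n} X i`, there is a constant `C > 0` such that for every `ε ∈ (0,1)` there is
`n ≥ 1` with `n ≤ C (log (1/ε) + 1)` such that for every real `t`, if `P(S n < t) > ε`
then `P(S n < t - c) > (δ₀ / 7) P(S n < t)`. -/
theorem gap_relative {Ω : Type*} [MeasurableSpace Ω]
    (μ : Measure Ω) [IsProbabilityMeasure μ] (X : ℕ → Ω → ℝ)
    (hXmeas : ∀ i, Measurable (X i))
    (hind : iIndepFun X μ)
    (hid : ∀ i, Measure.map (X i) μ = Measure.map (X 0) μ)
    (c : ℝ) (hc : 0 < c) (t₀ δ₀ : ℝ)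
    (ht₀ : μ {ω | X 0 ω < t₀} < 1 / 2)
    (hδ₀ : μ {ω | X 0 ω < t₀ - c} = ENNReal.ofReal δ₀)
    (hδ₀pos : 0 < δ₀) :
    ∃ C : ℝ, 0 < C ∧ ∀ ε : ℝ, 0 < ε → ε < 1 →
      ∃ n : ℕ, 0 < n ∧ (n : ℝ) ≤ C * (Real.log (1 / ε) + 1) ∧
        ∀ t : ℝ, ENNReal.ofReal ε < μ {ω | (∑ i ∈ Finset.range n, X i ω) < t} →
          (δ₀ / 7) * (μ {ω | (∑ i ∈ Finset.range n, X i ω) < t}).toReal <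
            (μ {ω | (∑ i ∈ Finset.range n, X i ω) < t - c}).toReal := by
  classical
  -- identical distribution of the CDFs
  have hmap : ∀ (i : ℕ) (u : ℝ), μ {ω | X i ω < u} = μ {ω | X 0 ω < u} := by
    intro i u
    have h1 : μ {ω | X i ω < u} = (Measure.map (X i) μ) (Set.Iio u) := by
      rw [Measure.map_apply (hXmeas i) measurableSet_Iio]; rfl
    have h2 : μ {ω | X 0 ω < u} = (Measure.map (X 0) μ) (Set.Iio u) := by
      rw [Measure.map_apply (hXmeas 0) measurableSet_Iio]; rfl
    rw [h1, h2, hid i]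
  refine ⟨24, by norm_num, ?_⟩
  intro ε hε0 hε1
  set L : ℝ := Real.log (1 / ε) with hLdef
  have hL : 0 < L := Real.log_pos (by rw [lt_div_iff₀ hε0]; linarith)
  set m : ℕ := ⌈3 * (L + 1)⌉₊ with hmdef
  have hmge : 3 * (L + 1) ≤ (m : ℝ) := Nat.le_ceil _
  have hm3 : 3 ≤ m := by
    have : (3 : ℝ) ≤ (m : ℝ) := by linarith
    exact_mod_cast this
  have hm1 : 1 ≤ m := by omega
  have hmlt : (m : ℝ) ≤ 3 * (L + 1) + 1 := le_of_lt (Nat.ceil_lt_add_one (by linarith))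
  set n : ℕ := 6 * m with hndef
  refine ⟨n, by omega, ?_, ?_⟩
  · -- n ≤ 24 (L + 1)
    have : (n : ℝ) = 6 * (m : ℝ) := by push_cast [hndef]; ring
    rw [this]
    linarith
  intro t hAt
  set S : Ω → ℝ := fun ω => ∑ i ∈ Finset.range n, X i ω with hSdef
  have hSmeas : Measurable S := Finset.measurable_sum _ fun i _ => hXmeas i
  set A : Set Ω := {ω | S ω < t} with hAdef
  set A' : Set Ω := {ω | S ω < t - c} with hA'def
  have hAmeas : MeasurableSet A := measurableSet_lt hSmeas measurable_const
  have hA'meas : MeasurableSet A' := measurableSet_lt hSmeas measurable_const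
  -- the "bad" set
  set U : Set Ω :=
    ⋃ T ∈ Finset.powersetCard (5 * m + 1) (Finset.range n), ⋂ i ∈ T, {ω | X i ω < t₀}
    with hUdef
  have hPmeas : ∀ i : ℕ, MeasurableSet {ω | X i ω < t₀} := fun i =>
    measurableSet_lt (hXmeas i) measurable_const
  have hUmeas : MeasurableSet U :=
    Finset.measurableSet_biUnion _ fun T _ => Finset.measurableSet_biInter _ fun i _ => hPmeas i
  set B : Set Ω := A \ U with hBdef
  have hBmeas : MeasurableSet B := hAmeas.diff hUmeas
  -- union bound for U
  have hU_bound : μ U ≤ (Nat.choose n (5 * m + 1) : ℝ≥0∞) * (2⁻¹ : ℝ≥0∞) ^ (5 * m + 1) := by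
    refine le_trans (measure_biUnion_finset_le _ _) ?_
    have hterm : ∀ T ∈ Finset.powersetCard (5 * m + 1) (Finset.range n),
        μ (⋂ i ∈ T, {ω | X i ω < t₀}) ≤ (2⁻¹ : ℝ≥0∞) ^ (5 * m + 1) := by
      intro T hT
      rw [Finset.mem_powersetCard] at hT
      have heq : μ (⋂ i ∈ T, {ω | X i ω < t₀}) = ∏ i ∈ T, μ {ω | X i ω < t₀} := by
        refine hind.meas_biInter fun i _ => ?_
        exact ⟨Set.Iio t₀, measurableSet_Iio, rfl⟩
      rw [heq]
      have hprod : ∏ i ∈ T, μ {ω | X i ω < t₀} = (μ {ω | X 0 ω < t₀}) ^ T.card := by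
        rw [Finset.prod_congr rfl fun i _ => hmap i t₀, Finset.prod_const]
      rw [hprod, hT.2]
      refine pow_le_pow_left' ?_ _
      have : (1 / 2 : ℝ≥0∞) = 2⁻¹ := by rw [one_div]
      exact le_of_lt (this ▸ ht₀)
    refine le_trans (Finset.sum_le_sum hterm) ?_
    rw [Finset.sum_const, Finset.card_powersetCard, Finset.card_range, nsmul_eq_mul]
  -- being in B forces at least m indices with X i ≥ t₀
  have hB_count : ∀ ω ∈ B,
      m ≤ ((Finset.range n).filter (fun i => t₀ ≤ X i ω)).card := by
    intro ω hω
    have hnotU : ω ∉ U := hω.2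
    have hle : ((Finset.range n).filter (fun i => X i ω < t₀)).card ≤ 5 * m := by
      by_contra hgt
      push_neg at hgt
      obtain ⟨T, hTsub, hTcard⟩ := Finset.exists_subset_card_eq hgt
      refine hnotU ?_
      refine Set.mem_iUnion₂.mpr ⟨T, Finset.mem_powersetCard.mpr
        ⟨hTsub.trans (Finset.filter_subset _ _), hTcard⟩, ?_⟩
      refine Set.mem_iInter₂.mpr fun i hi => ?_
      exact (Finset.mem_filter.mp (hTsub hi)).2
    have htotal := Finset.card_filter_add_card_filter_not
      (s := Finset.range n) (p := fun i => X i ω < t₀)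
    rw [Finset.card_range] at htotal
    have hcongr : ((Finset.range n).filter (fun i => ¬ X i ω < t₀)).card
        = ((Finset.range n).filter (fun i => t₀ ≤ X i ω)).card := by
      congr 1
      exact Finset.filter_congr fun i _ => by rw [not_lt]
    omega
  -- counting inequality: m * μ B ≤ ∑_i μ (B ∩ {t₀ ≤ X i})
  set C' : ℕ → Set Ω := fun i => {ω | t₀ ≤ X i ω} with hC'def
  have hC'meas : ∀ i, MeasurableSet (C' i) := fun i =>
    measurableSet_le measurable_const (hXmeas i)
  have hcount : (m : ℝ≥0∞) * μ B ≤ ∑ i ∈ Finset.range n, μ (B ∩ C' i) := by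
    have hpt : ∀ ω, (m : ℝ≥0∞) * B.indicator 1 ω
        ≤ ∑ i ∈ Finset.range n, (B ∩ C' i).indicator 1 ω := by
      intro ω
      by_cases hω : ω ∈ B
      · rw [Set.indicator_of_mem hω]
        simp only [Pi.one_apply, mul_one]
        set G : Finset ℕ := (Finset.range n).filter (fun i => t₀ ≤ X i ω) with hGdef
        have h1 : ((G.card : ℕ) : ℝ≥0∞) = ∑ i ∈ G, (B ∩ C' i).indicator 1 ω := by
          rw [Finset.sum_congr rfl fun i hi => ?_]
          · rw [Finset.sum_const, nsmul_eq_mul, mul_one]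
          · have hiC : ω ∈ C' i := (Finset.mem_filter.mp hi).2
            rw [Set.indicator_of_mem (show ω ∈ B ∩ C' i from ⟨hω, hiC⟩), Pi.one_apply]
        calc (m : ℝ≥0∞) ≤ (G.card : ℝ≥0∞) := by
              exact_mod_cast hB_count ω hω
          _ = ∑ i ∈ G, (B ∩ C' i).indicator 1 ω := h1
          _ ≤ ∑ i ∈ Finset.range n, (B ∩ C' i).indicator 1 ω :=
              Finset.sum_le_sum_of_subset (Finset.filter_subset _ _)
      · rw [Set.indicator_of_notMem hω, mul_zero]
        exact zero_le
    calc (m : ℝ≥0∞) * μ B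
        = ∫⁻ ω, (m : ℝ≥0∞) * B.indicator 1 ω ∂μ := by
          rw [lintegral_const_mul _ ((measurable_one.indicator hBmeas))]
          rw [lintegral_indicator_one hBmeas]
      _ ≤ ∫⁻ ω, ∑ i ∈ Finset.range n, (B ∩ C' i).indicator 1 ω ∂μ := lintegral_mono hpt
      _ = ∑ i ∈ Finset.range n, μ (B ∩ C' i) := by
          rw [lintegral_finset_sum _ fun i _ =>
            measurable_one.indicator ((hBmeas.inter (hC'meas i)))]
          exact Finset.sum_congr rfl fun i _ => lintegral_indicator_one (hBmeas.inter (hC'meas i))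
  -- per-index independence inequality
  have hper : ∀ i ∈ Finset.range n, ENNReal.ofReal δ₀ * μ (B ∩ C' i) ≤ μ A' := by
    intro i hi
    set f : Ω → ℝ := ∑ j ∈ (Finset.range n).erase i, X j with hfdef
    have hindep : IndepFun f (X i) μ :=
      hind.indepFun_finsetSum_of_notMem hXmeas (Finset.notMem_erase i _)
    have hsum : ∀ ω, f ω + X i ω = S ω := by
      intro ω
      show (∑ j ∈ (Finset.range n).erase i, X j) ω + X i ω = ∑ j ∈ Finset.range n, X j ω
      rw [Finset.sum_apply]
      exact Finset.sum_erase_add _ _ hi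
    have hDsub : B ∩ C' i ⊆ f ⁻¹' Set.Iio (t - t₀) := by
      intro ω hω
      have h1 : S ω < t := hω.1.1
      have h2 : t₀ ≤ X i ω := hω.2
      have := hsum ω
      simp only [Set.mem_preimage, Set.mem_Iio]
      linarith
    have hsub' : f ⁻¹' Set.Iio (t - t₀) ∩ X i ⁻¹' Set.Iio (t₀ - c) ⊆ A' := by
      intro ω hω
      have h1 : f ω < t - t₀ := hω.1
      have h2 : X i ω < t₀ - c := hω.2
      have := hsum ω
      show S ω < t - c
      linarith
    have hmul : μ (f ⁻¹' Set.Iio (t - t₀) ∩ X i ⁻¹' Set.Iio (t₀ - c))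
        = μ (f ⁻¹' Set.Iio (t - t₀)) * μ (X i ⁻¹' Set.Iio (t₀ - c)) :=
      hindep.measure_inter_preimage_eq_mul _ _ measurableSet_Iio measurableSet_Iio
    have hXi : μ (X i ⁻¹' Set.Iio (t₀ - c)) = ENNReal.ofReal δ₀ := by
      have : X i ⁻¹' Set.Iio (t₀ - c) = {ω | X i ω < t₀ - c} := rfl
      rw [this, hmap i, hδ₀]
    calc ENNReal.ofReal δ₀ * μ (B ∩ C' i)
        ≤ ENNReal.ofReal δ₀ * μ (f ⁻¹' Set.Iio (t - t₀)) := by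
          exact mul_le_mul_right (measure_mono hDsub) _
      _ = μ (f ⁻¹' Set.Iio (t - t₀) ∩ X i ⁻¹' Set.Iio (t₀ - c)) := by
          rw [hmul, hXi, mul_comm]
      _ ≤ μ A' := measure_mono hsub'
  -- combine: δ₀ * m * μ B ≤ n * μ A'
  have hmain : ENNReal.ofReal δ₀ * ((m : ℝ≥0∞) * μ B) ≤ (n : ℝ≥0∞) * μ A' := by
    calc ENNReal.ofReal δ₀ * ((m : ℝ≥0∞) * μ B)
        ≤ ENNReal.ofReal δ₀ * ∑ i ∈ Finset.range n, μ (B ∩ C' i) :=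
          mul_le_mul_right hcount _
      _ = ∑ i ∈ Finset.range n, ENNReal.ofReal δ₀ * μ (B ∩ C' i) := Finset.mul_sum _ _ _
      _ ≤ ∑ i ∈ Finset.range n, μ A' := Finset.sum_le_sum hper
      _ = (n : ℝ≥0∞) * μ A' := by
          rw [Finset.sum_const, Finset.card_range, nsmul_eq_mul]
  -- pass to real numbers
  have hAfin : μ A ≠ ⊤ := measure_ne_top μ A
  have hA'fin : μ A' ≠ ⊤ := measure_ne_top μ A'
  have hBfin : μ B ≠ ⊤ := measure_ne_top μ B
  have hUfin : μ U ≠ ⊤ := measure_ne_top μ U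
  set a : ℝ := (μ A).toReal with hadef
  set a' : ℝ := (μ A').toReal with ha'def
  set b : ℝ := (μ B).toReal with hbdef
  set u : ℝ := (μ U).toReal with hudef
  have hεa : ε < a := by
    rw [hadef]
    exact (ENNReal.ofReal_lt_iff_lt_toReal (le_of_lt hε0) hAfin).mp hAt
  have hmainR : δ₀ * ((m : ℝ) * b) ≤ (n : ℝ) * a' := by
    have h := ENNReal.toReal_mono (by
      exact ENNReal.mul_ne_top (ENNReal.natCast_ne_top n) hA'fin) hmain
    rw [ENNReal.toReal_mul, ENNReal.toReal_mul, ENNReal.toReal_mul,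
      ENNReal.toReal_ofReal (le_of_lt hδ₀pos), ENNReal.toReal_natCast,
      ENNReal.toReal_natCast] at h
    exact h
  have habu : a ≤ b + u := by
    have h1 : μ A ≤ μ B + μ U := by
      refine le_trans (measure_mono ?_) (measure_union_le B U)
      intro ω hω
      by_cases hωU : ω ∈ U
      · exact Or.inr hωU
      · exact Or.inl ⟨hω, hωU⟩
    have h2 := ENNReal.toReal_mono (by
      exact ENNReal.add_ne_top.mpr ⟨hBfin, hUfin⟩) h1
    rw [ENNReal.toReal_add hBfin hUfin] at h2
    exact h2
  -- real bound on u
  have hu_real : u ≤ ((n.choose (5 * m + 1) : ℝ)) * (1 / 2 : ℝ) ^ (5 * m + 1) := by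
    have h := ENNReal.toReal_mono (by
      refine ENNReal.mul_ne_top (ENNReal.natCast_ne_top _) ?_
      exact ENNReal.pow_ne_top (by simp)) hU_bound
    rw [ENNReal.toReal_mul, ENNReal.toReal_pow, ENNReal.toReal_natCast] at h
    simpa [one_div] using h
  -- binomial estimate : choose n (5m+1) * (1/2)^(5m+1) ≤ (1/2)^m
  have hchoose : ((n.choose (5 * m + 1) : ℝ)) * (1 / 2 : ℝ) ^ (5 * m + 1)
      ≤ (1 / 2 : ℝ) ^ m := by
    have hc1 : n.choose (5 * m + 1) = n.choose (m - 1) := by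
      have h1 : 5 * m + 1 ≤ n := by omega
      have := Nat.choose_symm h1
      rw [← this]
      congr 1
      omega
    have hc2 : n.choose (m - 1) ≤ n.choose m := by
      have h1 : m - 1 < n / 2 := by omega
      have := Nat.choose_le_succ_of_lt_half_left h1
      have h2 : m - 1 + 1 = m := by omega
      rwa [h2] at this
    have hc3 : (n.choose m : ℝ) * (1 / 5 : ℝ) ^ m ≤ (6 / 5 : ℝ) ^ n := by
      have hbin := add_pow (1 / 5 : ℝ) 1 n
      have hsingle : (1 / 5 : ℝ) ^ m * 1 ^ (n - m) * (n.choose m : ℝ)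
          ≤ ∑ k ∈ Finset.range (n + 1), (1 / 5 : ℝ) ^ k * 1 ^ (n - k) * (n.choose k : ℝ) := by
        refine Finset.single_le_sum (f := fun k => (1 / 5 : ℝ) ^ k * 1 ^ (n - k) * (n.choose k : ℝ))
          (fun k _ => ?_) ?_
        · positivity
        · exact Finset.mem_range.mpr (by omega)
      rw [← hbin] at hsingle
      have : (1 / 5 : ℝ) + 1 = 6 / 5 := by norm_num
      rw [this] at hsingle
      calc (n.choose m : ℝ) * (1 / 5 : ℝ) ^ m
          = (1 / 5 : ℝ) ^ m * 1 ^ (n - m) * (n.choose m : ℝ) := by ring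
        _ ≤ (6 / 5 : ℝ) ^ n := hsingle
    have hc4 : (n.choose m : ℝ) ≤ (6 / 5 : ℝ) ^ n * 5 ^ m := by
      have h5 : (0 : ℝ) < (1 / 5 : ℝ) ^ m := by positivity
      have := mul_le_mul_of_nonneg_right hc3 (le_of_lt (show (0:ℝ) < 5 ^ m by positivity))
      calc (n.choose m : ℝ) = (n.choose m : ℝ) * ((1 / 5 : ℝ) ^ m * 5 ^ m) := by
            rw [← mul_pow]
            norm_num
        _ = (n.choose m : ℝ) * (1 / 5 : ℝ) ^ m * 5 ^ m := by ring
        _ ≤ (6 / 5 : ℝ) ^ n * 5 ^ m := this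
    have hcn : (n.choose (5 * m + 1) : ℝ) ≤ (6 / 5 : ℝ) ^ n * 5 ^ m := by
      rw [hc1]
      exact le_trans (by exact_mod_cast Nat.cast_le.mpr hc2) hc4
    calc ((n.choose (5 * m + 1) : ℝ)) * (1 / 2 : ℝ) ^ (5 * m + 1)
        ≤ ((6 / 5 : ℝ) ^ n * 5 ^ m) * (1 / 2 : ℝ) ^ (5 * m + 1) := by
          refine mul_le_mul_of_nonneg_right hcn (by positivity)
      _ = ((6 / 5 : ℝ) ^ 6 * 5 * (1 / 2 : ℝ) ^ 5) ^ m * (1 / 2) := by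
          rw [hndef, pow_mul, pow_succ (1/2:ℝ) (5*m), pow_mul, ← mul_pow, ← mul_assoc,
            ← mul_pow]
      _ ≤ (1 / 2 : ℝ) ^ m * 1 := by
          refine mul_le_mul ?_ (by norm_num) (by norm_num) (by positivity)
          refine pow_le_pow_left₀ (by positivity) (by norm_num) m
      _ = (1 / 2 : ℝ) ^ m := by ring
  -- (1/2)^m ≤ ε / 7
  have hhalf : (1 / 2 : ℝ) ^ m ≤ ε / 7 := by
    have h2m : (7 : ℝ) / ε ≤ (2 : ℝ) ^ m := by
      have hlog2 : (2 : ℝ) / 3 ≤ Real.log 2 := by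
        have := Real.log_two_gt_d9
        linarith
      have hexp : (2 : ℝ) ^ m = Real.exp ((m : ℝ) * Real.log 2) := by
        rw [← Real.log_pow, Real.exp_log (by positivity)]
      have hmono : Real.exp (L + 2) ≤ Real.exp ((m : ℝ) * Real.log 2) := by
        refine Real.exp_le_exp.mpr ?_
        have h1 : (2 : ℝ) / 3 * (m : ℝ) ≤ Real.log 2 * (m : ℝ) :=
          mul_le_mul_of_nonneg_right hlog2 (by positivity)
        linarith
      have hexpL : Real.exp L = 1 / ε := Real.exp_log (by positivity)
      have he2 : (7 : ℝ) < Real.exp 2 := by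
        have h1 := Real.exp_one_gt_d9
        have h2 : Real.exp 2 = Real.exp 1 * Real.exp 1 := by
          rw [← Real.exp_add]; norm_num
        nlinarith
      have : (7 : ℝ) / ε ≤ Real.exp (L + 2) := by
        rw [Real.exp_add, hexpL]
        have : (7 : ℝ) / ε = (1 / ε) * 7 := by ring
        rw [this]
        refine mul_le_mul_of_nonneg_left (le_of_lt he2) (by positivity)
      rw [hexp]
      linarith [hmono, this]
    have hpp : (0:ℝ) < (1 / 2 : ℝ) ^ m := by positivity
    have h3 : (1 / 2 : ℝ) ^ m * (7 / ε) ≤ 1 := by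
      calc (1 / 2 : ℝ) ^ m * (7 / ε) ≤ (1 / 2 : ℝ) ^ m * (2 : ℝ) ^ m :=
            mul_le_mul_of_nonneg_left h2m (le_of_lt hpp)
        _ = 1 := by rw [← mul_pow]; norm_num
    have h4 : (1 / 2 : ℝ) ^ m ≤ 1 / (7 / ε) := (le_div_iff₀ (by positivity)).mpr h3
    rwa [one_div_div] at h4
  -- final arithmetic
  have hu2 : u ≤ ε / 7 := le_trans hu_real (le_trans hchoose hhalf)
  have hnR : (n : ℝ) = 6 * (m : ℝ) := by push_cast [hndef]; ring
  rw [hnR] at hmainR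
  have hmpos : (0 : ℝ) < (m : ℝ) := by
    have : (0 : ℕ) < m := by omega
    exact_mod_cast this
  -- from δ₀ * (m * b) ≤ 6 m a' : δ₀ * b ≤ 6 a'
  have hkey : δ₀ * b ≤ 6 * a' := by
    refine le_of_mul_le_mul_left ?_ hmpos
    have h1 : (m:ℝ) * (δ₀ * b) = δ₀ * ((m:ℝ) * b) := by ring
    have h2 : (m:ℝ) * (6 * a') = 6 * (m:ℝ) * a' := by ring
    rw [h1, h2]
    exact hmainR
  have hbge : 6 * a / 7 < b := by linarith
  have hmul : δ₀ * (6 * a / 7) < δ₀ * b := by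
    exact mul_lt_mul_of_pos_left hbge hδ₀pos
  have hring : δ₀ * (6 * a / 7) = 6 * (δ₀ / 7 * a) := by ring
  show δ₀ / 7 * a < a'
  linarith
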